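/- Let w be a scalar with |w| = 1 and A_w the weighted backward shift on X, A_w x = w(x_{k+1})_{k∈ℕ}. Then every periodic point of A_w (i.e., every x ∈ X with A_w^N x = x for some N ∈ ℕ) is a constant sequence: Per(A_w) ⊆ span{(1,1,1,...)}. -/

import Mathlib

open Filter Topology

/-- Membership in the complex space `X` (0-based: `x k` is the paper's
`x_{k+1}`). -/
def MemXC (x : ℕ → ℂ) : Prop :=
  Summable (fun k : ℕ => ‖x (k + 1) / ((k : ℂ) + 2) - x k / ((k : ℂ) + 1)‖) ∧
  Tendsto (fun k : ℕ => x k / ((k : ℂ) + 1)) atTop (𝓝 0)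

/-- For `|w| = 1`, every periodic point of the weighted backward shift
`A_w x = w (x_{k+1})` on `X` (i.e., every `x ∈ X` with `A_w^N x = x` for some
`N ≥ 1`) is a constant sequence. -/
theorem stmt_14 (w : ℂ) (hw : ‖w‖ = 1) (x : ℕ → ℂ) (hx : MemXC x)
    (N : ℕ) (hN : 0 < N) (hper : ∀ k : ℕ, w ^ N * x (k + N) = x k) :
    ∃ c : ℂ, x = fun _ => c := by
  suffices h : ∀ r, x (r + 1) = x r by
    refine ⟨x 0, funext fun n => ?_⟩
    induction n with
    | zero => rfl
    | succ n ih => rw [h n, ih]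
  intro r
  by_contra hne
  set t : ℕ → ℝ := fun k : ℕ => ‖x (k + 1) / ((k : ℂ) + 2) - x k / ((k : ℂ) + 1)‖ with ht
  set D : ℝ := ‖x (r + 1) - x r‖ with hD
  have hDpos : 0 < D := norm_pos_iff.mpr (sub_ne_zero.mpr hne)
  have hwN : ‖w ^ N‖ = 1 := by rw [norm_pow, hw, one_pow]
  have step : ∀ m : ℕ, ‖x (m + N + 1) - x (m + N)‖ = ‖x (m + 1) - x m‖ := by
    intro m
    have h1 := hper m
    have h2 := hper (m + 1)
    calc ‖x (m + N + 1) - x (m + N)‖ = ‖w ^ N * (x (m + N + 1) - x (m + N))‖ := by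
          rw [norm_mul, hwN, one_mul]
      _ = ‖x (m + 1) - x m‖ := by
          rw [mul_sub, h1, show m + N + 1 = m + 1 + N by ring, h2]
  have hnormd : ∀ j : ℕ, ‖x (r + j * N + 1) - x (r + j * N)‖ = D := by
    intro j
    induction j with
    | zero => simp [hD]
    | succ j ih =>
      rw [show r + (j + 1) * N = r + j * N + N by ring, step, ih]
  have key : ∀ k : ℕ, ‖x (k + 1) - x k‖ ≤ ((k : ℝ) + 2) * t k + ‖x k / ((k : ℂ) + 1)‖ := by
    intro k
    have h1 : ((k : ℂ) + 1) ≠ 0 := Nat.cast_add_one_ne_zero k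
    have h2 : ((k : ℂ) + 2) ≠ 0 := by
      rw [show ((k : ℂ) + 2) = ((k + 2 : ℕ) : ℂ) by push_cast; ring]
      exact_mod_cast (by omega : k + 2 ≠ 0)
    have e : x (k + 1) - x k
        = ((k : ℂ) + 2) * (x (k + 1) / ((k : ℂ) + 2) - x k / ((k : ℂ) + 1))
          + x k / ((k : ℂ) + 1) := by
      field_simp
      ring
    have hn2 : ‖((k : ℂ) + 2)‖ = (k : ℝ) + 2 := by
      rw [show ((k : ℂ) + 2) = ((k + 2 : ℕ) : ℂ) by push_cast; ring]
      rw [Complex.norm_natCast]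
      push_cast
      ring
    calc ‖x (k + 1) - x k‖
        ≤ ‖((k : ℂ) + 2) * (x (k + 1) / ((k : ℂ) + 2) - x k / ((k : ℂ) + 1))‖
          + ‖x k / ((k : ℂ) + 1)‖ := by rw [e]; exact norm_add_le _ _
      _ = ((k : ℝ) + 2) * t k + ‖x k / ((k : ℂ) + 1)‖ := by rw [norm_mul, hn2, ht]
  -- the subsequence g j = r + j * N
  have hgmono : StrictMono (fun j : ℕ => r + j * N) := by
    apply strictMono_nat_of_lt_succ
    intro j
    simp only [Nat.succ_mul]
    omega
  have hg : Tendsto (fun j : ℕ => r + j * N) atTop atTop := hgmono.tendsto_atTop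
  have hyn : Tendsto (fun j : ℕ => ‖x (r + j * N) / (((r + j * N : ℕ) : ℂ) + 1)‖) atTop (𝓝 0) := by
    have := (hx.2.comp hg).norm
    simpa using this
  have hev : ∀ᶠ j : ℕ in atTop,
      ‖x (r + j * N) / (((r + j * N : ℕ) : ℂ) + 1)‖ < D / 2 :=
    hyn.eventually_lt_const (by linarith)
  obtain ⟨J, hJ⟩ := eventually_atTop.mp hev
  -- summability of subsequence
  have hsub : Summable (fun j : ℕ => t (r + j * N)) := hx.1.comp_injective hgmono.injective
  -- lower bound for j ≥ J
  set c : ℝ := D / (2 * ((r : ℝ) + N + 2)) with hc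
  have hcpos : 0 < c := by
    apply div_pos hDpos
    positivity
  have hlow : ∀ j : ℕ, J ≤ j → c / ((j : ℝ) + 1) ≤ t (r + j * N) := by
    intro j hj
    have hk := key (r + j * N)
    rw [hnormd j] at hk
    have hy := hJ j hj
    have hpos : (0 : ℝ) < ((r + j * N : ℕ) : ℝ) + 2 := by positivity
    have h1 : D / 2 ≤ (((r + j * N : ℕ) : ℝ) + 2) * t (r + j * N) := by linarith
    have h2 : D / 2 / (((r + j * N : ℕ) : ℝ) + 2) ≤ t (r + j * N) :=
      (div_le_iff₀ hpos).mpr (by linarith [h1])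
    refine le_trans ?_ h2
    rw [div_div, div_div]
    apply div_le_div_of_nonneg_left (le_of_lt hDpos) (by positivity)
    push_cast
    have hj0 : (0 : ℝ) ≤ (j : ℝ) := Nat.cast_nonneg j
    have hN0 : (0 : ℝ) ≤ (N : ℝ) := Nat.cast_nonneg N
    have hr0 : (0 : ℝ) ≤ (r : ℝ) := Nat.cast_nonneg r
    nlinarith
  -- derive summability of harmonic-like series: contradiction
  have hsum1 : Summable (fun j : ℕ => t (r + (j + J) * N)) := by
    exact (summable_nat_add_iff J).mpr hsub
  have hsum2 : Summable (fun j : ℕ => c / (((j + J : ℕ) : ℝ) + 1)) := by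
    apply Summable.of_nonneg_of_le (fun j => by positivity) (fun j => ?_) hsum1
    exact hlow (j + J) (by omega)
  have hsum3 : Summable (fun j : ℕ => c / ((j : ℝ) + 1)) := by
    rw [← summable_nat_add_iff J]
    exact hsum2.congr fun j => by push_cast; ring
  have hsum4 : Summable (fun j : ℕ => 1 / ((j : ℝ) + 1)) := by
    have := hsum3.mul_left c⁻¹
    refine this.congr fun j => ?_
    rw [← mul_div_assoc, inv_mul_cancel₀ hcpos.ne']
  have hsum5 : Summable (fun j : ℕ => 1 / (j : ℝ)) := by
    rw [← summable_nat_add_iff 1]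
    exact hsum4.congr fun j => by push_cast; ring
  exact Real.not_summable_one_div_natCast hsum5
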